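/- Let φ : ℝᵐ → ℝ be bounded below by φ* ∈ ℝ, let (p_k) be a sequence in ℝᵐ with g_k ∈ ℝᵐ, let (M_k) be symmetric positive definite m×m matrices, and let γ ≥ 1, ϑ_min > 0, Λ > 0. Assume for every k: φ(p_{k+1}) ≤ φ(p_k) − (ϑ_min²/(4γ)) g_kᵀM_k⁻¹g_k, and qᵀM_k q ≤ Λ‖q‖² for all q ∈ ℝᵐ. Then lim_{k→∞} ‖g_k‖ = 0. -/

import Mathlib

open Matrix Filter

lemma sandwich_dot {m : ℕ} (S A : Matrix (Fin m) (Fin m) ℝ) (hSsymm : Sᵀ = S)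
    (x : Fin m → ℝ) : (S *ᵥ x) ⬝ᵥ A *ᵥ (S *ᵥ x) = x ⬝ᵥ (S * A * S) *ᵥ x := by
  rw [Matrix.mulVec_mulVec, ← Matrix.vecMul_transpose, hSsymm,
    ← Matrix.dotProduct_mulVec, Matrix.mulVec_mulVec, ← Matrix.mul_assoc]

open scoped MatrixOrder in
lemma inv_quad_lower {m : ℕ} {M : Matrix (Fin m) (Fin m) ℝ} (hM : M.PosDef)
    {Λ : ℝ} (hΛ : 0 < Λ) (hb : ∀ q : Fin m → ℝ, q ⬝ᵥ M *ᵥ q ≤ Λ * ∑ i, (q i)^2)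
    (x : Fin m → ℝ) : ∑ i, (x i)^2 ≤ Λ * (x ⬝ᵥ M⁻¹ *ᵥ x) := by
  have hinv : (M⁻¹).PosDef := hM.inv
  have hs := hinv.posSemidef
  set S := CFC.sqrt (M⁻¹) with hSdef
  have hS2 : S * S = M⁻¹ := CFC.sqrt_mul_sqrt_self _ hs.nonneg
  have hSsymm : Sᵀ = S := by
    have h := (CFC.sqrt_nonneg (M⁻¹)).posSemidef.1
    rwa [IsHermitian, conjTranspose_eq_transpose_of_trivial] at h
  have hdetS : IsUnit S.det := by
    have : (M⁻¹).det ≠ 0 := ne_of_gt hinv.det_pos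
    rw [← hS2, det_mul] at this
    exact (Ne.isUnit (left_ne_zero_of_mul this))
  have hMeq : M = S⁻¹ * S⁻¹ := by
    have : (M⁻¹)⁻¹ = (S * S)⁻¹ := by rw [hS2]
    rwa [Matrix.nonsing_inv_nonsing_inv M (ne_of_gt hM.det_pos).isUnit,
      Matrix.mul_inv_rev] at this
  have hSMS : S * M * S = 1 := by
    rw [hMeq, Matrix.mul_assoc, Matrix.mul_assoc, Matrix.nonsing_inv_mul S hdetS,
      Matrix.mul_one, Matrix.mul_nonsing_inv S hdetS]
  have key := hb (S *ᵥ x)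
  rw [sandwich_dot S M hSsymm x, hSMS, Matrix.one_mulVec] at key
  have hR : ∑ i, ((S *ᵥ x) i)^2 = x ⬝ᵥ M⁻¹ *ᵥ x := by
    have : ∑ i, ((S *ᵥ x) i)^2 = (S *ᵥ x) ⬝ᵥ (1 : Matrix (Fin m) (Fin m) ℝ) *ᵥ (S *ᵥ x) := by
      simp [Matrix.one_mulVec, dotProduct, pow_two]
    rw [this, sandwich_dot S 1 hSsymm x, Matrix.mul_one, hS2]
  rw [hR] at key
  have : x ⬝ᵥ x = ∑ i, (x i)^2 := by simp [dotProduct, pow_two]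
  linarith [key, this ▸ key]

/-- Convergence of gradient norms to zero for the inexact Newton iterates. -/
theorem gradient_tendsto_zero {m : ℕ} (φ : (Fin m → ℝ) → ℝ) (φstar : ℝ)
    (hlow : ∀ x, φstar ≤ φ x)
    (p g : ℕ → Fin m → ℝ) (M : ℕ → Matrix (Fin m) (Fin m) ℝ)
    (hMs : ∀ k, (M k).IsSymm) (hMpd : ∀ k, (M k).PosDef)
    (γ ϑmin Λ : ℝ) (hγ : 1 ≤ γ) (hϑ : 0 < ϑmin) (hΛ : 0 < Λ)
    (hdesc : ∀ k, φ (p (k+1)) ≤ φ (p k) - (ϑmin^2 / (4 * γ)) * (g k ⬝ᵥ (M k)⁻¹ *ᵥ g k))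
    (hbound : ∀ k, ∀ q : Fin m → ℝ, q ⬝ᵥ (M k) *ᵥ q ≤ Λ * ∑ i, (q i)^2) :
    Tendsto (fun k => Real.sqrt (∑ i, (g k i)^2)) atTop (nhds 0) := by
  set c := ϑmin^2 / (4 * γ) with hc
  have hcpos : 0 < c := by positivity
  set a : ℕ → ℝ := fun k => g k ⬝ᵥ (M k)⁻¹ *ᵥ g k with ha
  have hanonneg : ∀ k, 0 ≤ a k := by
    intro k
    have := ((hMpd k).inv.posSemidef).re_dotProduct_nonneg (g k)
    simpa using this
  have hpartial : ∀ n, ∑ k ∈ Finset.range n, a k ≤ (φ (p 0) - φstar) / c := by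
    intro n
    have htel : ∑ k ∈ Finset.range n, (φ (p k) - φ (p (k+1))) = φ (p 0) - φ (p n) := by
      have := Finset.sum_range_sub' (fun k => φ (p k)) n
      simpa using this
    have hsum : c * ∑ k ∈ Finset.range n, a k ≤ φ (p 0) - φ (p n) := by
      rw [← htel, Finset.mul_sum]
      exact Finset.sum_le_sum fun k _ => by linarith [hdesc k]
    rw [le_div_iff₀ hcpos, mul_comm]
    linarith [hlow (p n)]
  have hsummable : Summable a := summable_of_sum_range_le hanonneg hpartial
  have haz : Tendsto a atTop (nhds 0) := hsummable.tendsto_atTop_zero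
  have hsq : Tendsto (fun k => ∑ i, (g k i)^2) atTop (nhds 0) := by
    have hup : ∀ k, ∑ i, (g k i)^2 ≤ Λ * a k := fun k =>
      inv_quad_lower (hMpd k) hΛ (hbound k) (g k)
    have hlo : ∀ k, 0 ≤ ∑ i, (g k i)^2 := fun k =>
      Finset.sum_nonneg fun i _ => sq_nonneg _
    have : Tendsto (fun k => Λ * a k) atTop (nhds 0) := by
      simpa using haz.const_mul Λ
    exact squeeze_zero hlo hup this
  simpa [Real.sqrt_zero] using hsq.sqrt
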